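/- arXiv:1611.01685 — 2 statements merged into one kernel-verified Lean document; each statement's English description precedes it below -/
import Mathlib

section
/- Let Λ be a lattice in ℝⁿ with minimal vector length m > 0, and let P be the union of the closed balls of radius m/2 centered at the points of Λ. Then P is a sphere packing, and the limit as r → ∞ of vol(B_r(0) ∩ P)/vol(B_r(0)) exists and equals vol(B^n_{m/2})/vol(ℝⁿ/Λ), where B^n_{m/2} is a ball of radius m/2 in ℝⁿ. -/
open MeasureTheory Filter Metric Real Polynomial
open scoped FourierTransform InnerProductSpace
open scoped Pointwise

set_option maxHeartbeats 1000000

noncomputable section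

/-- A sphere packing in `ℝⁿ`: a nonempty collection of closed balls of a fixed positive
radius with pairwise disjoint interiors, recorded by the set of centers and the radius. -/
structure SpherePacking (n : ℕ) where
  centers : Set (EuclideanSpace ℝ (Fin n))
  radius : ℝ
  radius_pos : 0 < radius
  centers_nonempty : centers.Nonempty
  disjoint : centers.Pairwise fun x y => Disjoint (ball x radius) (ball y radius)

/-- The region of `ℝⁿ` covered by the balls of a sphere packing. -/
def SpherePacking.toSet {n : ℕ} (P : SpherePacking n) : Set (EuclideanSpace ℝ (Fin n)) :=
  ⋃ x ∈ P.centers, closedBall x P.radius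

/-- The upper density of a sphere packing:
`limsup_{R → ∞} vol(B_R(0) ∩ P) / vol(B_R(0))`. -/
def SpherePacking.upperDensity {n : ℕ} (P : SpherePacking n) : ℝ :=
  limsup (fun R : ℝ =>
    (volume (P.toSet ∩ closedBall 0 R)).toReal /
      (volume (closedBall (0 : EuclideanSpace ℝ (Fin n)) R)).toReal) atTop

/-- The sphere packing density of `ℝⁿ`: the supremum of the upper densities
of all sphere packings in `ℝⁿ`. -/
def spherePackingDensity (n : ℕ) : ℝ :=
  ⨆ P : SpherePacking n, P.upperDensity

/-- Let `Λ` be a lattice in `ℝⁿ` (the integer linear combinations of a basis `b` of `ℝⁿ`)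
with minimal vector length `m > 0`, and let `P` be the union of closed balls of radius
`m/2` centered at the points of `Λ`.  Then `P` is a sphere packing, and
`vol(B_R(0) ∩ P)/vol(B_R(0))` converges as `R → ∞` to `vol(Bⁿ_{m/2}) / vol(ℝⁿ/Λ)`,
where `vol(ℝⁿ/Λ)` is the absolute value of the determinant of the basis matrix. -/
theorem lattice_packing_density (n : ℕ) (hn : 0 < n)
    (b : Fin n → EuclideanSpace ℝ (Fin n))
    (hb : LinearIndependent ℝ b) (hspan : Submodule.span ℝ (Set.range b) = ⊤)
    (Λ : Set (EuclideanSpace ℝ (Fin n)))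
    (hΛ : Λ = {x | ∃ c : Fin n → ℤ, x = ∑ i, (c i : ℝ) • b i})
    (m : ℝ) (hm : 0 < m)
    (hmin : IsLeast {r : ℝ | ∃ x ∈ Λ, x ≠ 0 ∧ ‖x‖ = r} m) :
    (∃ P : SpherePacking n, P.centers = Λ ∧ P.radius = m / 2) ∧
    Tendsto (fun R : ℝ =>
        (volume ((⋃ x ∈ Λ, closedBall x (m / 2)) ∩ closedBall 0 R)).toReal /
          (volume (closedBall (0 : EuclideanSpace ℝ (Fin n)) R)).toReal) atTop
      (nhds ((volume (closedBall (0 : EuclideanSpace ℝ (Fin n)) (m / 2))).toReal /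
        |Matrix.det (Matrix.of fun i j => b i j)|)) := by
  classical
  haveI : Nonempty (Fin n) := Fin.pos_iff_nonempty.mp hn
  haveI : Nontrivial (EuclideanSpace ℝ (Fin n)) :=
    Module.nontrivial_of_finrank_pos (R := ℝ) (by rw [finrank_euclideanSpace_fin]; exact hn)
  set r := m / 2 with hr
  have hr0 : 0 < r := by positivity
  -- the basis and the lattice
  set B : Module.Basis (Fin n) ℝ (EuclideanSpace ℝ (Fin n)) := Module.Basis.mk hb (by rw [hspan]) with hB
  have hBb : ⇑B = b := Module.Basis.coe_mk _ _
  set L := (Submodule.span ℤ (Set.range ⇑B)).toAddSubgroup with hL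
  have hΛL : Λ = (L : Set (EuclideanSpace ℝ (Fin n))) := by
    rw [hΛ]
    ext x
    simp only [Set.mem_setOf_eq, SetLike.mem_coe, hL, hBb, Submodule.mem_toAddSubgroup]
    rw [Submodule.mem_span_range_iff_exists_fun]
    constructor
    · rintro ⟨c, rfl⟩
      exact ⟨c, by simp_rw [← Int.cast_smul_eq_zsmul ℝ]⟩
    · rintro ⟨c, hc⟩
      exact ⟨c, by rw [← hc]; simp_rw [← Int.cast_smul_eq_zsmul ℝ]⟩
  have h0Λ : (0 : EuclideanSpace ℝ (Fin n)) ∈ Λ := by rw [hΛL]; exact L.zero_mem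
  -- separation
  have hsep : ∀ x ∈ Λ, ∀ y ∈ Λ, x ≠ y → m ≤ dist x y := by
    intro x hx y hy hxy
    rw [dist_eq_norm]
    refine hmin.2 ⟨x - y, ?_, sub_ne_zero.mpr hxy, rfl⟩
    rw [hΛL] at hx hy ⊢
    exact L.sub_mem hx hy
  constructor
  · refine ⟨⟨Λ, m / 2, by positivity, ⟨0, h0Λ⟩, ?_⟩, rfl, rfl⟩
    intro x hx y hy hxy
    exact ball_disjoint_ball (by linarith [hsep x hx y hy hxy])
  -- the density computation
  set S : Set (EuclideanSpace ℝ (Fin n)) := ⋃ x ∈ Λ, closedBall x r with hS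
  set F : Set (EuclideanSpace ℝ (Fin n)) := ZSpan.fundamentalDomain B with hF
  have hFd : IsAddFundamentalDomain L F volume := ZSpan.isAddFundamentalDomain' B volume
  have hFmeas : MeasurableSet F := ZSpan.fundamentalDomain_measurableSet B
  haveI hLcount : Countable L := by
    have : Λ.Countable := by
      rw [hΛ]
      have : {x : EuclideanSpace ℝ (Fin n) | ∃ c : Fin n → ℤ, x = ∑ i, (c i : ℝ) • b i}
          = Set.range (fun c : Fin n → ℤ => ∑ i, (c i : ℝ) • b i) := by
        ext x; simp [eq_comm]
      rw [this]
      exact Set.countable_range _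
    rw [hΛL] at this
    exact this.to_subtype
  -- S as a union over L
  have hSL : S = ⋃ g : L, closedBall (g : EuclideanSpace ℝ (Fin n)) r := by
    rw [hS, hΛL, Set.biUnion_eq_iUnion]
    rfl
  have hSmeas : MeasurableSet S := by
    rw [hSL]; exact MeasurableSet.iUnion fun g => measurableSet_closedBall
  -- a.e. disjointness of the balls
  have hball_aed : Pairwise (Function.onFun (AEDisjoint volume)
      fun g : L => closedBall (g : EuclideanSpace ℝ (Fin n)) r) := by
    intro g g' hgg'
    have hgΛ : (g : EuclideanSpace ℝ (Fin n)) ∈ Λ := by rw [hΛL]; exact g.2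
    have hg'Λ : (g' : EuclideanSpace ℝ (Fin n)) ∈ Λ := by rw [hΛL]; exact g'.2
    have hdist : m ≤ dist (g : EuclideanSpace ℝ (Fin n)) g' :=
      hsep _ hgΛ _ hg'Λ (fun h => hgg' (Subtype.ext h))
    have hsub : closedBall (g : EuclideanSpace ℝ (Fin n)) r ∩ closedBall (g' : _) r
        ⊆ sphere (g : EuclideanSpace ℝ (Fin n)) r := by
      rintro z ⟨hz1, hz2⟩
      rw [mem_closedBall] at hz1 hz2
      rw [mem_sphere]
      have := dist_triangle (g : EuclideanSpace ℝ (Fin n)) z g'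
      have : r ≤ dist z g := by
        rw [dist_comm z g]; linarith [dist_triangle (g : EuclideanSpace ℝ (Fin n)) z (g' : _)]
      linarith
    exact measure_mono_null hsub (Measure.addHaar_sphere volume _ r)
  -- volume of S ∩ F equals volume of one ball
  have hSF : volume (S ∩ F) = volume (closedBall (0 : EuclideanSpace ℝ (Fin n)) r) := by
    have h1 : volume (closedBall (0 : EuclideanSpace ℝ (Fin n)) r)
        = ∑' g : L, volume ((g +ᵥ closedBall (0 : EuclideanSpace ℝ (Fin n)) r) ∩ F) :=
      hFd.measure_eq_tsum _
    have hvb : ∀ g : L, g +ᵥ closedBall (0 : EuclideanSpace ℝ (Fin n)) r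
        = closedBall (g : EuclideanSpace ℝ (Fin n)) r := by
      intro g
      show (g : EuclideanSpace ℝ (Fin n)) +ᵥ closedBall (0 : EuclideanSpace ℝ (Fin n)) r
          = closedBall (g : EuclideanSpace ℝ (Fin n)) r
      rw [vadd_closedBall, vadd_eq_add, add_zero]
    have h2 : S ∩ F = ⋃ g : L, (closedBall (g : EuclideanSpace ℝ (Fin n)) r ∩ F) := by
      rw [hSL, Set.iUnion_inter]
    have h3 : volume (S ∩ F)
        = ∑' g : L, volume (closedBall (g : EuclideanSpace ℝ (Fin n)) r ∩ F) := by
      rw [h2]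
      exact measure_iUnion₀
        (fun g g' hgg' => ((hball_aed hgg').mono Set.inter_subset_left Set.inter_subset_left))
        (fun g => (measurableSet_closedBall.inter hFmeas).nullMeasurableSet)
    rw [h3, h1]
    exact tsum_congr fun g => by rw [hvb g]
  -- periodicity of S
  have hSvadd : ∀ g : L, (g : EuclideanSpace ℝ (Fin n)) +ᵥ S = S := by
    intro g
    ext y
    simp only [Set.mem_vadd_set_iff_neg_vadd_mem, vadd_eq_add, hS, Set.mem_iUnion,
      mem_closedBall, exists_prop]
    constructor
    · rintro ⟨x, hx, hdist⟩
      refine ⟨x + g, ?_, ?_⟩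
      · rw [hΛL] at hx ⊢; exact L.add_mem hx g.2
      · rw [dist_eq_norm] at hdist ⊢
        convert hdist using 2
        abel
    · rintro ⟨x, hx, hdist⟩
      refine ⟨x - g, ?_, ?_⟩
      · rw [hΛL] at hx ⊢; exact L.sub_mem hx g.2
      · rw [dist_eq_norm] at hdist ⊢
        convert hdist using 2
        abel
  have hperiod : ∀ g : L, volume (S ∩ ((g : EuclideanSpace ℝ (Fin n)) +ᵥ F)) = volume (S ∩ F) := by
    intro g
    have h1 : S ∩ ((g : EuclideanSpace ℝ (Fin n)) +ᵥ F)
        = (g : EuclideanSpace ℝ (Fin n)) +ᵥ (S ∩ F) := by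
      rw [Set.vadd_set_inter, hSvadd g]
    rw [h1, measure_vadd]
  -- bound on the fundamental domain
  obtain ⟨d, hd⟩ := (ZSpan.fundamentalDomain_isBounded B).subset_closedBall 0
  have h0F : (0 : EuclideanSpace ℝ (Fin n)) ∈ F := by
    rw [hF, ZSpan.mem_fundamentalDomain]
    intro i
    simp [Set.mem_Ico]
  have hd0 : (0 : ℝ) ≤ d := by
    have := hd h0F
    rwa [mem_closedBall, dist_self] at this
  have hdF : ∀ z ∈ F, ‖z‖ ≤ d := fun z hz => by
    have := hd hz; rwa [mem_closedBall, dist_zero_right] at this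
  -- the tiles
  set idx : ℝ → Set L := fun R => {g : L | (g : EuclideanSpace ℝ (Fin n)) +ᵥ F ⊆ closedBall 0 R}
    with hidx
  set U : ℝ → Set (EuclideanSpace ℝ (Fin n)) :=
    fun R => ⋃ g ∈ idx R, (g : EuclideanSpace ℝ (Fin n)) +ᵥ F with hU
  have hUsub : ∀ R, U R ⊆ closedBall 0 R := fun R => Set.iUnion₂_subset fun g hg => hg
  have hsubU : ∀ R, closedBall (0 : EuclideanSpace ℝ (Fin n)) (R - 2 * d) ⊆ U R := by
    intro R y hy
    rw [mem_closedBall, dist_zero_right] at hy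
    obtain ⟨v, hv, -⟩ := ZSpan.exist_unique_vadd_mem_fundamentalDomain B y
    have hvy : ((v : EuclideanSpace ℝ (Fin n)) + y) ∈ F := hv
    have hnv : ‖(v : EuclideanSpace ℝ (Fin n))‖ ≤ R - d := by
      have h1 := hdF _ hvy
      have h2 : ‖(v : EuclideanSpace ℝ (Fin n))‖ ≤ ‖(v : EuclideanSpace ℝ (Fin n)) + y‖ + ‖y‖ := by
        calc ‖(v : EuclideanSpace ℝ (Fin n))‖ = ‖((v : EuclideanSpace ℝ (Fin n)) + y) - y‖ := by
              congr 1; abel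
        _ ≤ ‖(v : EuclideanSpace ℝ (Fin n)) + y‖ + ‖y‖ := norm_sub_le _ _
      linarith
    refine Set.mem_biUnion
      (show (⟨-(v : EuclideanSpace ℝ (Fin n)), L.neg_mem ((Submodule.mem_toAddSubgroup _).mpr v.2)⟩ : L)
        ∈ idx R from ?_) ?_
    · intro z hz
      obtain ⟨f, hf, rfl⟩ := hz
      rw [mem_closedBall, dist_zero_right]
      have := hdF _ hf
      calc ‖(-(v : EuclideanSpace ℝ (Fin n))) +ᵥ f‖ = ‖f - (v : EuclideanSpace ℝ (Fin n))‖ := by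
            rw [vadd_eq_add]; congr 1; abel
      _ ≤ ‖f‖ + ‖(v : EuclideanSpace ℝ (Fin n))‖ := norm_sub_le _ _
      _ ≤ d + (R - d) := add_le_add this hnv
      _ = R := by ring
    · refine ⟨(v : EuclideanSpace ℝ (Fin n)) + y, hvy, ?_⟩
      show -(v : EuclideanSpace ℝ (Fin n)) + ((v : EuclideanSpace ℝ (Fin n)) + y) = y
      abel
  -- measure of unions of tiles
  have hvadd_coe : ∀ g : L, (g +ᵥ F : Set (EuclideanSpace ℝ (Fin n)))
      = (g : EuclideanSpace ℝ (Fin n)) +ᵥ F := fun g => rfl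
  have hUvol : ∀ R, volume (S ∩ U R) * volume F = volume (S ∩ F) * volume (U R) := by
    intro R
    haveI : Countable (idx R) := ((idx R).to_countable).to_subtype
    have haed : Pairwise (Function.onFun (AEDisjoint volume)
        fun g : idx R => ((g : L) : EuclideanSpace ℝ (Fin n)) +ᵥ F) := by
      intro g g' hgg'
      have h := hFd.aedisjoint (show (g : L) ≠ (g' : L) from fun h => hgg' (Subtype.ext h))
      simpa only [Function.onFun, hvadd_coe] using h
    have hmeasT : ∀ g : idx R,
        MeasurableSet (((g : L) : EuclideanSpace ℝ (Fin n)) +ᵥ F) :=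
      fun g => hFmeas.const_vadd _
    have hUeq : U R = ⋃ g : idx R, ((g : L) : EuclideanSpace ℝ (Fin n)) +ᵥ F := by
      rw [hU]; exact Set.biUnion_eq_iUnion _ _
    have h1 : volume (U R) = ∑' _ : idx R, volume F := by
      rw [hUeq, measure_iUnion₀ haed (fun g => (hmeasT g).nullMeasurableSet)]
      exact tsum_congr fun g => measure_vadd _ _ _
    have h2 : volume (S ∩ U R) = ∑' _ : idx R, volume (S ∩ F) := by
      have : S ∩ U R = ⋃ g : idx R, (S ∩ (((g : L) : EuclideanSpace ℝ (Fin n)) +ᵥ F)) := by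
        rw [hUeq, Set.inter_iUnion]
      rw [this, measure_iUnion₀
        (fun g g' hgg' => ((haed hgg').mono Set.inter_subset_right Set.inter_subset_right))
        (fun g => (hSmeas.inter (hmeasT g)).nullMeasurableSet)]
      exact tsum_congr fun g => hperiod _
    rw [h1, h2, ← ENNReal.tsum_mul_right, ← ENNReal.tsum_mul_left]
  -- the sandwich in ℝ≥0∞
  have hlow : ∀ R : ℝ, volume (S ∩ F) * volume (closedBall (0 : EuclideanSpace ℝ (Fin n)) (R - 2 * d))
      ≤ volume (S ∩ closedBall 0 R) * volume F := by
    intro R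
    calc volume (S ∩ F) * volume (closedBall (0 : EuclideanSpace ℝ (Fin n)) (R - 2 * d))
        ≤ volume (S ∩ F) * volume (U R) := mul_le_mul_right (measure_mono (hsubU R)) _
      _ = volume (S ∩ U R) * volume F := (hUvol R).symm
      _ ≤ volume (S ∩ closedBall 0 R) * volume F :=
          mul_le_mul_left (measure_mono (Set.inter_subset_inter_right S (hUsub R))) _
  have hup : ∀ R : ℝ, volume (S ∩ closedBall (0 : EuclideanSpace ℝ (Fin n)) R) * volume F
      ≤ volume (S ∩ F) * volume (closedBall (0 : EuclideanSpace ℝ (Fin n)) (R + 2 * d)) := by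
    intro R
    have hBU : closedBall (0 : EuclideanSpace ℝ (Fin n)) R ⊆ U (R + 2 * d) := by
      have := hsubU (R + 2 * d)
      rwa [show R + 2 * d - 2 * d = R by ring] at this
    calc volume (S ∩ closedBall (0 : EuclideanSpace ℝ (Fin n)) R) * volume F
        ≤ volume (S ∩ U (R + 2 * d)) * volume F :=
          mul_le_mul_left (measure_mono (Set.inter_subset_inter_right S hBU)) _
      _ = volume (S ∩ F) * volume (U (R + 2 * d)) := hUvol _
      _ ≤ volume (S ∩ F) * volume (closedBall (0 : EuclideanSpace ℝ (Fin n)) (R + 2 * d)) :=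
          mul_le_mul_right (measure_mono (hUsub _)) _
  -- the covolume
  have hvolF : volume F = ENNReal.ofReal |Matrix.det (Matrix.of fun i j => b i j)| := by
    have hme := EuclideanSpace.volume_preserving_symm_measurableEquiv_toLp (Fin n)
    set le : EuclideanSpace ℝ (Fin n) ≃ₗ[ℝ] (Fin n → ℝ) := WithLp.linearEquiv 2 ℝ (Fin n → ℝ)
      with hle
    have himg : ⇑le '' F = ZSpan.fundamentalDomain (B.map le) := by
      rw [hF]; exact ZSpan.map_fundamentalDomain B le
    have h1 : volume F = volume (⇑le '' F) := by
      have hnm : NullMeasurableSet (⇑le '' F) volume := by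
        rw [himg]; exact (ZSpan.fundamentalDomain_measurableSet _).nullMeasurableSet
      have h2 := hme.measure_preimage hnm
      have hpre : (MeasurableEquiv.toLp 2 (Fin n → ℝ)).symm ⁻¹' (⇑le '' F) = F := by
        have hco : ⇑(MeasurableEquiv.toLp 2 (Fin n → ℝ)).symm = ⇑le := rfl
        rw [hco, Set.preimage_image_eq F le.injective]
      rw [hpre] at h2
      exact h2
    rw [h1, himg, ZSpan.volume_fundamentalDomain]
    have hmx : (Matrix.of ⇑(B.map le)) = Matrix.of (fun i j => b i j) := by
      ext i j
      simp only [Matrix.of_apply, Module.Basis.map_apply, hBb]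
      rfl
    rw [hmx]
  have hFne : volume F ≠ 0 := by
    rw [hF]; exact ZSpan.measure_fundamentalDomain_ne_zero B
  have hFlt : volume F < ⊤ := lt_of_le_of_lt (measure_mono hd) measure_closedBall_lt_top
  -- pass to real numbers
  set c := |Matrix.det (Matrix.of fun i j => b i j)| with hc
  have hcpos : 0 < c := by
    have h := hFne
    rw [hvolF] at h
    exact not_le.mp fun hle => h (ENNReal.ofReal_eq_zero.mpr hle)
  have hcF : (volume F).toReal = c := by rw [hvolF, ENNReal.toReal_ofReal hcpos.le]
  set a := (volume (closedBall (0 : EuclideanSpace ℝ (Fin n)) r)).toReal with ha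
  have hSFr : (volume (S ∩ F)).toReal = a := by rw [hSF]
  have hSFlt : volume (S ∩ F) ≠ ⊤ := by rw [hSF]; exact measure_closedBall_lt_top.ne
  have hSB : ∀ R : ℝ, volume (S ∩ closedBall (0 : EuclideanSpace ℝ (Fin n)) R) ≠ ⊤ :=
    fun R => (lt_of_le_of_lt (measure_mono Set.inter_subset_right)
      measure_closedBall_lt_top).ne
  have key : ∀ R : ℝ,
      a * (volume (closedBall (0 : EuclideanSpace ℝ (Fin n)) (R - 2 * d))).toReal
        ≤ (volume (S ∩ closedBall (0 : EuclideanSpace ℝ (Fin n)) R)).toReal * c ∧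
      (volume (S ∩ closedBall (0 : EuclideanSpace ℝ (Fin n)) R)).toReal * c
        ≤ a * (volume (closedBall (0 : EuclideanSpace ℝ (Fin n)) (R + 2 * d))).toReal := by
    intro R
    constructor
    · have h := ENNReal.toReal_mono (ENNReal.mul_ne_top (hSB R) hFlt.ne) (hlow R)
      rwa [ENNReal.toReal_mul, ENNReal.toReal_mul, hSFr, hcF] at h
    · have h := ENNReal.toReal_mono
        (ENNReal.mul_ne_top hSFlt measure_closedBall_lt_top.ne) (hup R)
      rwa [ENNReal.toReal_mul, ENNReal.toReal_mul, hSFr, hcF] at h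
  -- volume of balls
  have hvR : ∀ R : ℝ, 0 ≤ R →
      (volume (closedBall (0 : EuclideanSpace ℝ (Fin n)) R)).toReal
        = R ^ n * (volume (ball (0 : EuclideanSpace ℝ (Fin n)) 1)).toReal := by
    intro R hR
    rw [Measure.addHaar_closedBall volume _ hR, finrank_euclideanSpace_fin,
      ENNReal.toReal_mul, ENNReal.toReal_ofReal (by positivity)]
  have hupos : 0 < (volume (ball (0 : EuclideanSpace ℝ (Fin n)) 1)).toReal :=
    ENNReal.toReal_pos (measure_ball_pos volume _ one_pos).ne' measure_ball_lt_top.ne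
  have hvlim : ∀ t : ℝ, Tendsto (fun R =>
      (volume (closedBall (0 : EuclideanSpace ℝ (Fin n)) (R + t))).toReal /
        (volume (closedBall (0 : EuclideanSpace ℝ (Fin n)) R)).toReal) atTop (nhds 1) := by
    intro t
    have h1 : Tendsto (fun R : ℝ => ((R + t) / R) ^ n) atTop (nhds 1) := by
      have h2 : Tendsto (fun R : ℝ => 1 + t * R⁻¹) atTop (nhds (1 + t * 0)) :=
        tendsto_const_nhds.add (tendsto_const_nhds.mul tendsto_inv_atTop_zero)
      rw [mul_zero, add_zero] at h2
      have h3 := h2.pow n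
      rw [one_pow] at h3
      refine h3.congr' ?_
      filter_upwards [eventually_gt_atTop 0] with R hR
      congr 1
      field_simp
    refine Tendsto.congr' ?_ h1
    filter_upwards [eventually_ge_atTop (max 1 (-t))] with R hR
    have hR0 : (0 : ℝ) < R := lt_of_lt_of_le one_pos ((le_max_left _ _).trans hR)
    have hRt : (0 : ℝ) ≤ R + t := by
      have := (le_max_right 1 (-t)).trans hR; linarith
    rw [hvR _ hRt, hvR _ hR0.le, div_pow, mul_div_mul_right _ _ hupos.ne']
  -- squeeze
  have hlim_lo : Tendsto (fun R : ℝ => a / c *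
      ((volume (closedBall (0 : EuclideanSpace ℝ (Fin n)) (R - 2 * d))).toReal /
        (volume (closedBall (0 : EuclideanSpace ℝ (Fin n)) R)).toReal)) atTop (nhds (a / c)) := by
    have h := (hvlim (-(2 * d))).const_mul (a / c)
    rw [mul_one] at h
    refine h.congr fun R => ?_
    rw [show R + -(2 * d) = R - 2 * d by ring]
  have hlim_hi : Tendsto (fun R : ℝ => a / c *
      ((volume (closedBall (0 : EuclideanSpace ℝ (Fin n)) (R + 2 * d))).toReal /
        (volume (closedBall (0 : EuclideanSpace ℝ (Fin n)) R)).toReal)) atTop (nhds (a / c)) := by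
    have h := (hvlim (2 * d)).const_mul (a / c)
    rw [mul_one] at h
    exact h
  refine tendsto_of_tendsto_of_tendsto_of_le_of_le' hlim_lo hlim_hi ?_ ?_
  · filter_upwards [eventually_gt_atTop 0] with R hR
    have hvRpos : 0 < (volume (closedBall (0 : EuclideanSpace ℝ (Fin n)) R)).toReal :=
      ENNReal.toReal_pos (measure_closedBall_pos volume _ hR).ne' measure_closedBall_lt_top.ne
    have hk := (key R).1
    have hvnn : 0 ≤ (volume (closedBall (0 : EuclideanSpace ℝ (Fin n)) (R - 2 * d))).toReal :=
      ENNReal.toReal_nonneg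
    rw [div_mul_div_comm, div_le_div_iff₀ (by positivity) hvRpos]
    nlinarith [hk, hvRpos]
  · filter_upwards [eventually_gt_atTop 0] with R hR
    have hvRpos : 0 < (volume (closedBall (0 : EuclideanSpace ℝ (Fin n)) R)).toReal :=
      ENNReal.toReal_pos (measure_closedBall_pos volume _ hR).ne' measure_closedBall_lt_top.ne
    have hk := (key R).2
    have hvnn : 0 ≤ (volume (closedBall (0 : EuclideanSpace ℝ (Fin n)) (R + 2 * d))).toReal :=
      ENNReal.toReal_nonneg
    rw [div_mul_div_comm, div_le_div_iff₀ hvRpos (by positivity)]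
    nlinarith [hk, hvRpos]
end
end

section
/- For every sphere packing P in ℝⁿ and every ε > 0 there exists a periodic sphere packing in ℝⁿ whose upper density is at least the upper density of P minus ε. Consequently, the supremum of the upper densities of periodic sphere packings equals the sphere packing density Δ_{ℝⁿ}. -/
open MeasureTheory Filter Metric Real Polynomial
open scoped FourierTransform InnerProductSpace

open scoped ENNReal NNReal
set_option maxHeartbeats 1000000

noncomputable section

/-- A sphere packing is periodic if it is invariant under translation by every element
of some lattice (the integer span of a basis of `ℝⁿ`). -/
def SpherePacking.IsPeriodic {n : ℕ} (P : SpherePacking n) : Prop :=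
  ∃ b : Fin n → EuclideanSpace ℝ (Fin n),
    LinearIndependent ℝ b ∧ Submodule.span ℝ (Set.range b) = ⊤ ∧
    ∀ c : Fin n → ℤ, ∀ x : EuclideanSpace ℝ (Fin n),
      x ∈ P.centers ↔ x + ∑ i, (c i : ℝ) • b i ∈ P.centers

namespace PPAux
variable {n : ℕ}
abbrev E (n : ℕ) := EuclideanSpace ℝ (Fin n)



/-- half-open cube with corner `c` and side `a` -/
def cube (c : Fin n → ℝ) (a : ℝ) : Set (E n) :=
  (MeasurableEquiv.toLp 2 (Fin n → ℝ)).symm ⁻¹' (Set.univ.pi fun i => Set.Ico (c i) (c i + a))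

lemma mem_cube {c : Fin n → ℝ} {a : ℝ} {x : E n} :
    x ∈ cube c a ↔ ∀ i, c i ≤ x i ∧ x i < c i + a := by
  simp [cube, Set.mem_pi, Set.mem_Ico]

lemma cube_measurable (c : Fin n → ℝ) (a : ℝ) : MeasurableSet (cube c a) :=
  (MeasurableSet.univ_pi fun i => measurableSet_Ico).preimage
    (MeasurableEquiv.toLp 2 (Fin n → ℝ)).symm.measurable

lemma volume_cube (c : Fin n → ℝ) {a : ℝ} (ha : 0 ≤ a) :
    volume (cube c a) = ENNReal.ofReal (a ^ n) := by
  rw [cube, (EuclideanSpace.volume_preserving_symm_measurableEquiv_toLp (Fin n)).measure_preimage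
      ((MeasurableSet.univ_pi fun i => measurableSet_Ico).nullMeasurableSet)]
  rw [volume_pi_pi]
  simp [Real.volume_Ico, ENNReal.ofReal_pow ha]



lemma abs_coord_le_dist (x y : E n) (i : Fin n) : |x i - y i| ≤ dist x y := by
  rw [EuclideanSpace.dist_eq]
  have h1 : |x i - y i| = Real.sqrt ((x i - y i)^2) := (Real.sqrt_sq_eq_abs _).symm
  rw [h1]
  apply Real.sqrt_le_sqrt
  have := Finset.single_le_sum (f := fun j => dist (x j) (y j) ^ 2)
    (fun j _ => sq_nonneg _) (Finset.mem_univ i)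
  simpa [Real.dist_eq] using this

lemma dist_le_of_forall_abs_le {x y : E n} {a : ℝ} (ha : 0 ≤ a)
    (h : ∀ i, |x i - y i| ≤ a) : dist x y ≤ a * Real.sqrt n := by
  rw [EuclideanSpace.dist_eq]
  have : ∑ i, dist (x i) (y i) ^ 2 ≤ ∑ _i : Fin n, a ^ 2 := by
    apply Finset.sum_le_sum
    intro i _
    have := h i
    rw [Real.dist_eq]
    exact pow_le_pow_left₀ (abs_nonneg _) this 2
  calc Real.sqrt (∑ i, dist (x i) (y i) ^ 2) ≤ Real.sqrt (n * a ^ 2) := by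
        apply Real.sqrt_le_sqrt; simpa [mul_comm] using this
    _ = a * Real.sqrt n := by
        rw [Real.sqrt_mul (Nat.cast_nonneg n), Real.sqrt_sq ha]; ring

lemma disjoint_balls_of_dist {x y : E n} {r : ℝ} (h : 2 * r ≤ dist x y) :
    Disjoint (ball x r) (ball y r) := by
  rw [Set.disjoint_left]
  intro z hz hz'
  rw [mem_ball] at hz hz'
  have := dist_triangle x z y
  rw [dist_comm x z] at this
  rw [dist_comm z y] at hz'
  rw [dist_comm z y] at this
  linarith

lemma dist_of_disjoint_balls {x y : E n} {r : ℝ} (hr : 0 < r)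
    (h : Disjoint (ball x r) (ball y r)) : 2 * r ≤ dist x y := by
  by_contra hlt
  push_neg at hlt
  have hm : midpoint ℝ x y ∈ ball x r ∩ ball y r := by
    have h2 : ‖(2:ℝ)‖ = 2 := by norm_num
    constructor
    · rw [mem_ball, dist_midpoint_left, h2]
      linarith
    · rw [mem_ball, dist_midpoint_right, h2]
      linarith
  exact Set.disjoint_left.1 h hm.1 hm.2

/-- lattice vector -/
def lat (a : ℝ) (w : Fin n → ℤ) : E n := (EuclideanSpace.equiv (Fin n) ℝ).symm (fun i => a * w i)

lemma lat_apply (a : ℝ) (w : Fin n → ℤ) (i : Fin n) : lat a w i = a * w i := rfl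

lemma lat_add (a : ℝ) (w w' : Fin n → ℤ) : lat a (w + w') = lat a w + lat a w' := by
  ext i
  simp [lat_apply, PiLp.add_apply, Pi.add_apply]
  push_cast
  ring

lemma lat_zero (a : ℝ) : lat a (0 : Fin n → ℤ) = (0 : E n) := by
  ext i
  simp [lat_apply]

/-- the cell of the grid with offset `o` and mesh `a` containing `x` -/
def gridIdx (o : Fin n → ℝ) (a : ℝ) (x : E n) : Fin n → ℤ := fun i => ⌊(x i - o i) / a⌋

lemma mem_cell_iff {o : Fin n → ℝ} {a : ℝ} (ha : 0 < a) {x : E n} {v : Fin n → ℤ} :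
    x ∈ cube (fun i => o i + a * v i) a ↔ v = gridIdx o a x := by
  rw [mem_cube]
  constructor
  · intro h
    funext i
    obtain ⟨h1, h2⟩ := h i
    rw [gridIdx]
    symm
    rw [Int.floor_eq_iff]
    constructor
    · rw [le_div_iff₀ ha]; linarith
    · rw [div_lt_iff₀ ha]; push_cast; linarith
  · rintro rfl i
    constructor
    · have := Int.floor_le ((x i - o i) / a)
      rw [le_div_iff₀ ha] at this
      simp only [gridIdx]
      linarith
    · have := Int.lt_floor_add_one ((x i - o i) / a)
      rw [div_lt_iff₀ ha] at this
      simp only [gridIdx]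
      push_cast
      linarith

lemma cell_cover {o : Fin n → ℝ} {a : ℝ} (ha : 0 < a) (x : E n) :
    x ∈ cube (fun i => o i + a * (gridIdx o a x) i) a := by
  rw [mem_cell_iff ha]

lemma cell_disjoint {o : Fin n → ℝ} {a : ℝ} (ha : 0 < a) :
    Set.univ.PairwiseDisjoint (fun v : Fin n → ℤ => cube (fun i => o i + a * v i) a) := by
  intro v _ w _ hvw
  rw [Function.onFun, Set.disjoint_left]
  intro x hx hx'
  rw [mem_cell_iff ha] at hx hx'
  exact hvw (hx.trans hx'.symm)

lemma cube_add_mem {c : Fin n → ℝ} {a : ℝ} {x : E n} (t : E n) :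
    x + t ∈ cube c a ↔ x ∈ cube (fun i => c i - t i) a := by
  rw [mem_cube, mem_cube]
  constructor
  · intro h i
    have := h i
    rw [PiLp.add_apply] at this
    constructor <;> [linarith [this.1]; linarith [this.2]]
  · intro h i
    have := h i
    rw [PiLp.add_apply]
    constructor <;> [linarith [this.1]; linarith [this.2]]

lemma volume_preimage_add (t : E n) (s : Set (E n)) :
    volume ((fun x => x + t) ⁻¹' s) = volume s := by
  have : (fun x : E n => x + t) = (fun x : E n => t + x) := by
    funext x; exact add_comm x t
  rw [this, measure_preimage_add]



def ratio (P : SpherePacking n) (R : ℝ) : ℝ :=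
  (volume (P.toSet ∩ closedBall 0 R)).toReal /
      (volume (closedBall (0 : E n) R)).toReal

lemma upperDensity_eq (P : SpherePacking n) : P.upperDensity = limsup (ratio P) atTop := rfl

lemma ratio_nonneg (P : SpherePacking n) (R : ℝ) : 0 ≤ ratio P R :=
  div_nonneg ENNReal.toReal_nonneg ENNReal.toReal_nonneg

lemma ratio_le_one (P : SpherePacking n) (R : ℝ) : ratio P R ≤ 1 := by
  rw [ratio]
  rcases eq_or_ne ((volume (closedBall (0 : E n) R)).toReal) 0 with h | h
  · rw [h, div_zero]; norm_num
  · rw [div_le_one]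
    · apply ENNReal.toReal_mono (measure_closedBall_lt_top).ne
      exact measure_mono Set.inter_subset_right
    · exact lt_of_le_of_ne ENNReal.toReal_nonneg (Ne.symm h)

lemma ratio_bddAbove (P : SpherePacking n) :
    IsBoundedUnder (· ≤ ·) atTop (ratio P) :=
  Filter.isBoundedUnder_of ⟨1, ratio_le_one P⟩

lemma ratio_bddBelow (P : SpherePacking n) :
    IsBoundedUnder (· ≥ ·) atTop (ratio P) :=
  Filter.isBoundedUnder_of ⟨0, ratio_nonneg P⟩

lemma upperDensity_nonneg (P : SpherePacking n) : 0 ≤ P.upperDensity :=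
  le_limsup_of_frequently_le
    (Filter.Frequently.of_forall (ratio_nonneg P)) (ratio_bddAbove P)

lemma upperDensity_le_one (P : SpherePacking n) : P.upperDensity ≤ 1 :=
  limsup_le_of_le ((ratio_bddBelow P).isCoboundedUnder_le)
    (Filter.Eventually.of_forall (ratio_le_one P))


/-- cell of the grid -/
def cell (o : Fin n → ℝ) (a : ℝ) (v : Fin n → ℤ) : Set (E n) :=
  cube (fun i => o i + a * v i) a

lemma cell_measurable (o : Fin n → ℝ) (a : ℝ) (v : Fin n → ℤ) : MeasurableSet (cell o a v) :=
  cube_measurable _ _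

lemma volume_cell (o : Fin n → ℝ) {a : ℝ} (ha : 0 ≤ a) (v : Fin n → ℤ) :
    volume (cell o a v) = ENNReal.ofReal (a ^ n) := volume_cube _ ha

lemma dist_le_of_mem_cell {o : Fin n → ℝ} {a : ℝ} (ha : 0 < a) {v : Fin n → ℤ}
    {y z : E n} (hy : y ∈ cell o a v) (hz : z ∈ cell o a v) :
    dist y z ≤ a * Real.sqrt n := by
  apply dist_le_of_forall_abs_le ha.le
  intro i
  rw [cell, mem_cube] at hy hz
  have h1 := hy i; have h2 := hz i
  rw [abs_sub_le_iff]
  constructor <;> linarith [h1.1, h1.2, h2.1, h2.2]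

lemma cell_subset_ball {o : Fin n → ℝ} {a R : ℝ} (ha : 0 < a) {v : Fin n → ℤ}
    (h : (cell o a v ∩ closedBall (0 : E n) R).Nonempty) :
    cell o a v ⊆ closedBall (0 : E n) (R + a * Real.sqrt n) := by
  obtain ⟨z, hz, hzR⟩ := h
  intro y hy
  rw [mem_closedBall] at hzR ⊢
  have hd : dist y z ≤ a * Real.sqrt n := dist_le_of_mem_cell ha hy hz
  calc dist y 0 ≤ dist y z + dist z 0 := dist_triangle _ _ _
    _ ≤ a * Real.sqrt n + R := by linarith
    _ = R + a * Real.sqrt n := by ring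

lemma mem_cell_gridIdx {o : Fin n → ℝ} {a : ℝ} (ha : 0 < a) (x : E n) :
    x ∈ cell o a (gridIdx o a x) := cell_cover ha x

lemma cell_pairwiseDisjoint {o : Fin n → ℝ} {a : ℝ} (ha : 0 < a) :
    Set.univ.PairwiseDisjoint (fun v : Fin n → ℤ => cell o a v) := cell_disjoint ha

/-- If the packing has large volume in a ball, some grid cell has large packing volume. -/
lemma exists_good_cell (P : SpherePacking n) {o : Fin n → ℝ} {a : ℝ} (ha : 0 < a)
    (s : ℝ≥0∞) {R : ℝ}
    (h : s * volume (closedBall (0 : E n) (R + a * Real.sqrt n)) <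
      volume (P.toSet ∩ closedBall 0 R)) :
    ∃ v : Fin n → ℤ, s * ENNReal.ofReal (a ^ n) < volume (P.toSet ∩ cell o a v) := by
  by_contra hcon
  push_neg at hcon
  set T : Set (Fin n → ℤ) := {v | (cell o a v ∩ closedBall (0 : E n) R).Nonempty} with hT
  have hsub : P.toSet ∩ closedBall 0 R ⊆ ⋃ v ∈ T, (P.toSet ∩ cell o a v) := by
    intro x hx
    have hg : gridIdx o a x ∈ T := ⟨x, mem_cell_gridIdx ha x, hx.2⟩
    exact Set.mem_biUnion hg ⟨hx.1, mem_cell_gridIdx ha x⟩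
  have h1 : volume (P.toSet ∩ closedBall 0 R) ≤
      ∑' v : T, volume (P.toSet ∩ cell o a (v : Fin n → ℤ)) :=
    (measure_mono hsub).trans (measure_biUnion_le _ (Set.to_countable T) _)
  have h2 : ∑' v : T, volume (P.toSet ∩ cell o a (v : Fin n → ℤ)) ≤
      ∑' v : T, s * volume (cell o a (v : Fin n → ℤ)) := by
    apply ENNReal.tsum_le_tsum
    intro v
    calc volume (P.toSet ∩ cell o a (v : Fin n → ℤ)) ≤ s * ENNReal.ofReal (a ^ n) := hcon _
      _ = s * volume (cell o a (v : Fin n → ℤ)) := by rw [volume_cell _ ha.le]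
  have h3 : ∑' v : T, s * volume (cell o a (v : Fin n → ℤ)) =
      s * volume (⋃ v ∈ T, cell o a v) := by
    rw [ENNReal.tsum_mul_left, measure_biUnion (Set.to_countable T)
      ((cell_pairwiseDisjoint ha).subset (Set.subset_univ T))
      (fun v _ => cell_measurable o a v)]
  have h4 : volume (⋃ v ∈ T, cell o a v) ≤
      volume (closedBall (0 : E n) (R + a * Real.sqrt n)) := by
    apply measure_mono
    apply Set.iUnion₂_subset
    intro v hv
    exact cell_subset_ball ha hv
  have := h1.trans (h2.trans (h3.le.trans (mul_le_mul_right h4 s)))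
  exact absurd h (not_lt.mpr this)

lemma cell_eq_preimage {o : Fin n → ℝ} {a : ℝ} (v : Fin n → ℤ) :
    (fun x : E n => x + lat a v) ⁻¹' (cell o a v) = cell o a 0 := by
  ext x
  simp only [Set.mem_preimage, cell]
  rw [cube_add_mem]
  have h1 : (fun i => o i + a * v i - lat a v i) = (fun i => o i + a * ((0 : Fin n → ℤ) i)) := by
    funext i
    rw [lat_apply]
    simp
  rw [h1]

lemma volume_inter_cell_eq {Q : SpherePacking n} {a : ℝ} (o : Fin n → ℝ)
    (hinv : ∀ w : Fin n → ℤ, (fun x : E n => x + lat a w) ⁻¹' Q.toSet = Q.toSet)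
    (v : Fin n → ℤ) :
    volume (Q.toSet ∩ cell o a v) = volume (Q.toSet ∩ cell o a 0) := by
  have h : (fun x : E n => x + lat a v) ⁻¹' (Q.toSet ∩ cell o a v) =
      Q.toSet ∩ cell o a 0 := by
    rw [Set.preimage_inter, hinv v, cell_eq_preimage]
  rw [← h, volume_preimage_add]

/-- key lower bound: the upper density of a packing invariant under the lattice `a·ℤⁿ`
is at least its density in one fundamental cell. -/
lemma periodic_lower (Q : SpherePacking n) {a : ℝ} (ha : 0 < a) (o : Fin n → ℝ)
    (hmeas : MeasurableSet Q.toSet)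
    (hinv : ∀ w : Fin n → ℤ, (fun x : E n => x + lat a w) ⁻¹' Q.toSet = Q.toSet) :
    (volume (Q.toSet ∩ cell o a 0)).toReal / a ^ n ≤ Q.upperDensity := by
  set c₀ := volume (Q.toSet ∩ cell o a 0) with hc₀
  have hax : ENNReal.ofReal (a ^ n) ≠ 0 := by
    simp [ENNReal.ofReal_eq_zero, not_le]
    positivity
  have haxt : ENNReal.ofReal (a ^ n) ≠ ⊤ := ENNReal.ofReal_ne_top
  set t : ℝ≥0∞ := c₀ / ENNReal.ofReal (a ^ n) with ht
  have hc₀fin : c₀ ≠ ⊤ := by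
    apply ne_of_lt
    calc c₀ ≤ volume (cell o a 0) := measure_mono Set.inter_subset_right
      _ < ⊤ := by rw [volume_cell _ ha.le]; exact ENNReal.ofReal_lt_top
  have htfin : t ≠ ⊤ := by
    rw [ht]
    exact (ENNReal.div_lt_top hc₀fin hax).ne
  have htmul : t * ENNReal.ofReal (a ^ n) = c₀ := ENNReal.div_mul_cancel hax haxt
  have hcell : ∀ v : Fin n → ℤ, volume (Q.toSet ∩ cell o a v) = t * volume (cell o a v) := by
    intro v
    rw [volume_inter_cell_eq o hinv v, volume_cell _ ha.le, ← hc₀, ← htmul]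
  set b := a * Real.sqrt n with hb
  have hbnn : 0 ≤ b := by positivity
  -- main volume bound for large R
  have hmain : ∀ R : ℝ, b ≤ R →
      t * volume (closedBall (0 : E n) (R - b)) ≤ volume (Q.toSet ∩ closedBall 0 R) := by
    intro R hR
    set S : Set (Fin n → ℤ) := {v | (cell o a v ∩ closedBall (0 : E n) (R - b)).Nonempty}
      with hS
    have hcov : closedBall (0 : E n) (R - b) ⊆ ⋃ v ∈ S, cell o a v := by
      intro x hx
      have hg : gridIdx o a x ∈ S := ⟨x, mem_cell_gridIdx ha x, hx⟩
      exact Set.mem_biUnion hg (mem_cell_gridIdx ha x)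
    have hin : ∀ v ∈ S, cell o a v ⊆ closedBall (0 : E n) R := by
      intro v hv
      have := cell_subset_ball ha hv
      rwa [sub_add_cancel] at this
    calc t * volume (closedBall (0 : E n) (R - b))
        ≤ t * volume (⋃ v ∈ S, cell o a v) := mul_le_mul_right (measure_mono hcov) t
      _ = ∑' v : S, (t * volume (cell o a (v : Fin n → ℤ))) := by
          rw [measure_biUnion (Set.to_countable S)
            ((cell_pairwiseDisjoint ha).subset (Set.subset_univ S))
            (fun v _ => cell_measurable o a v), ENNReal.tsum_mul_left]
      _ = ∑' v : S, volume (Q.toSet ∩ cell o a (v : Fin n → ℤ)) := by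
          congr 1; funext v; rw [hcell]
      _ = volume (⋃ v ∈ S, (Q.toSet ∩ cell o a v)) := by
          rw [measure_biUnion (Set.to_countable S)
            (((cell_pairwiseDisjoint ha).subset (Set.subset_univ S)).mono
              (fun v => Set.inter_subset_right))
            (fun v _ => hmeas.inter (cell_measurable o a v))]
      _ ≤ volume (Q.toSet ∩ closedBall 0 R) := by
          apply measure_mono
          apply Set.iUnion₂_subset
          intro v hv
          exact Set.inter_subset_inter_right _ (hin v hv)
  -- pass to the ratio
  set K := volume (ball (0 : E n) 1) with hK
  have hKfin : K ≠ ⊤ := measure_ball_lt_top.ne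
  have hKpos : 0 < K := by
    apply measure_ball_pos
    norm_num
  have hKtR : 0 < K.toReal := ENNReal.toReal_pos hKpos.ne' hKfin
  set φ : ℝ → ℝ := fun R => t.toReal * (((R - b) / R) ^ n) with hφ
  have hev : ∀ᶠ R in atTop, φ R ≤ ratio Q R := by
    filter_upwards [eventually_ge_atTop (max b 1)] with R hR
    have hRb : b ≤ R := le_trans (le_max_left _ _) hR
    have hR1 : (1:ℝ) ≤ R := le_trans (le_max_right _ _) hR
    have hR0 : 0 < R := by linarith
    have hRb0 : 0 ≤ R - b := by linarith
    have hvol : volume (closedBall (0 : E n) R) = ENNReal.ofReal (R ^ n) * K := by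
      rw [hK, Measure.addHaar_closedBall (volume) (0 : E n) hR0.le,
        finrank_euclideanSpace_fin]
    have hvol' : volume (closedBall (0 : E n) (R - b)) = ENNReal.ofReal ((R - b) ^ n) * K := by
      rw [hK, Measure.addHaar_closedBall (volume) (0 : E n) hRb0,
        finrank_euclideanSpace_fin]
    have hDfin : volume (Q.toSet ∩ closedBall (0 : E n) R) ≠ ⊤ := by
      apply ne_of_lt
      exact lt_of_le_of_lt (measure_mono Set.inter_subset_right) measure_closedBall_lt_top
    have hlow := hmain R hRb
    rw [hvol'] at hlow
    have hlowR : t.toReal * ((R - b) ^ n) * K.toReal ≤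
        (volume (Q.toSet ∩ closedBall (0 : E n) R)).toReal := by
      have := ENNReal.toReal_mono hDfin hlow
      rw [← mul_assoc] at this
      rw [ENNReal.toReal_mul, ENNReal.toReal_mul, ENNReal.toReal_ofReal ((by positivity : (0:ℝ) ≤ (R-b)^n))] at this
      exact this
    rw [ratio, hvol]
    have hden : (ENNReal.ofReal (R ^ n) * K).toReal = R ^ n * K.toReal := by
      rw [ENNReal.toReal_mul, ENNReal.toReal_ofReal (by positivity)]
    rw [hden]
    rw [hφ]
    have hdenpos : 0 < R ^ n * K.toReal := by positivity
    rw [le_div_iff₀ hdenpos]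
    calc t.toReal * ((R - b) / R) ^ n * (R ^ n * K.toReal)
        = t.toReal * ((R - b) ^ n) * K.toReal := by
          rw [div_pow]
          field_simp
      _ ≤ _ := hlowR
  have hφlim : Tendsto φ atTop (nhds t.toReal) := by
    have h1 : Tendsto (fun R : ℝ => (R - b) / R) atTop (nhds 1) := by
      have : (fun R : ℝ => (R - b) / R) =ᶠ[atTop] (fun R => 1 - b / R) := by
        filter_upwards [eventually_gt_atTop 0] with R hR
        field_simp
      rw [Filter.tendsto_congr' this]
      have := Filter.Tendsto.const_sub (1:ℝ) (tendsto_const_nhds.div_atTop (f := fun _ : ℝ => b) tendsto_id)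
      simpa using this
    have h2 : Tendsto (fun R : ℝ => ((R - b) / R) ^ n) atTop (nhds 1) := by
      have := h1.pow n
      simpa using this
    have := h2.const_mul t.toReal
    simpa [hφ, mul_comm] using this
  have hliminf : t.toReal ≤ liminf (ratio Q) atTop := by
    rw [← hφlim.liminf_eq]
    exact liminf_le_liminf hev hφlim.isBoundedUnder_ge
      ((ratio_bddAbove Q).isCoboundedUnder_ge)
  have hfinal : t.toReal ≤ Q.upperDensity := by
    rw [upperDensity_eq]
    exact le_trans hliminf (liminf_le_limsup (ratio_bddAbove Q) (ratio_bddBelow Q))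
  have : t.toReal = c₀.toReal / a ^ n := by
    rw [ht, ENNReal.toReal_div, ENNReal.toReal_ofReal (by positivity)]
  rwa [this] at hfinal

lemma equiv_symm_apply (x : Fin n → ℝ) (i : Fin n) :
    (EuclideanSpace.equiv (Fin n) ℝ).symm x i = x i := rfl

lemma sum_smul_basisFun (x : Fin n → ℝ) :
    ∑ i, x i • ((EuclideanSpace.basisFun (Fin n) ℝ) i) =
      (EuclideanSpace.equiv (Fin n) ℝ).symm x := by
  have h := (EuclideanSpace.basisFun (Fin n) ℝ).sum_repr
    ((EuclideanSpace.equiv (Fin n) ℝ).symm x)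
  have h2 : ∀ i, (EuclideanSpace.basisFun (Fin n) ℝ).repr
      ((EuclideanSpace.equiv (Fin n) ℝ).symm x) i = x i := fun i => rfl
  calc ∑ i, x i • ((EuclideanSpace.basisFun (Fin n) ℝ) i)
      = ∑ i, (EuclideanSpace.basisFun (Fin n) ℝ).repr
          ((EuclideanSpace.equiv (Fin n) ℝ).symm x) i •
          ((EuclideanSpace.basisFun (Fin n) ℝ) i) := by
        apply Finset.sum_congr rfl
        intro i _
        rw [h2]
    _ = (EuclideanSpace.equiv (Fin n) ℝ).symm x := h

lemma lat_eq_sum (A : ℝ) (c : Fin n → ℤ) :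
    lat A c = ∑ i, (c i : ℝ) • (A • ((EuclideanSpace.basisFun (Fin n) ℝ) i)) := by
  have h : ∀ i : Fin n, (c i : ℝ) • (A • ((EuclideanSpace.basisFun (Fin n) ℝ) i)) =
      (A * (c i : ℝ)) • ((EuclideanSpace.basisFun (Fin n) ℝ) i) := by
    intro i
    rw [smul_smul, mul_comm]
  rw [Finset.sum_congr rfl (fun i _ => h i), sum_smul_basisFun]
  rfl

lemma lat_neg_add (A : ℝ) (w c : Fin n → ℤ) (y : E n) :
    y + lat A w = (y + lat A (w - c)) + lat A c := by
  rw [add_assoc, ← lat_add, sub_add_cancel]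

/-- Construction of a periodic packing from a separated bounded cluster. -/
lemma mk_periodic (hn : 0 < n) {r m : ℝ} (hr : 0 < r) (hm : 0 ≤ m) (o : Fin n → ℝ)
    (C : Set (E n)) (hC : C.Nonempty) (hCc : C.Countable)
    (hCcube : ∀ x ∈ C, ∀ i, o i ≤ x i ∧ x i ≤ o i + m)
    (hCsep : C.Pairwise fun x y => 2 * r ≤ dist x y) :
    ∃ Q : SpherePacking n, Q.IsPeriodic ∧ MeasurableSet Q.toSet ∧
      (∀ w : Fin n → ℤ, (fun x : E n => x + lat (m + 2*r) w) ⁻¹' Q.toSet = Q.toSet) ∧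
      (⋃ x ∈ C, closedBall x r) ⊆ Q.toSet ∧ Q.radius = r := by
  set A := m + 2*r with hA
  have hA0 : 0 < A := by rw [hA]; linarith
  set cen : Set (E n) := {z | ∃ w : Fin n → ℤ, ∃ y ∈ C, z = y + lat A w} with hcen
  have hmem : ∀ z : E n, z ∈ cen ↔ ∃ w : Fin n → ℤ, ∃ y ∈ C, z = y + lat A w :=
    fun z => Iff.rfl
  -- membership shift property
  have hshift : ∀ c : Fin n → ℤ, ∀ x : E n, x ∈ cen ↔ x + lat A c ∈ cen := by
    intro c x
    rw [hmem, hmem]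
    constructor
    · rintro ⟨w, y, hy, rfl⟩
      exact ⟨w + c, y, hy, by rw [lat_add, add_assoc]⟩
    · rintro ⟨w, y, hy, hyx⟩
      refine ⟨w - c, y, hy, ?_⟩
      have h6 : y + lat A (w - c) + lat A c = x + lat A c := by
        rw [← lat_neg_add]
        exact hyx.symm
      exact (add_right_cancel h6).symm
  -- distance bound between distinct centers
  have hdist : ∀ u ∈ cen, ∀ u' ∈ cen, u ≠ u' → 2 * r ≤ dist u u' := by
    intro u hu u' hu' hne
    obtain ⟨w, x, hx, rfl⟩ := (hmem u).1 hu
    obtain ⟨w', y, hy, rfl⟩ := (hmem u').1 hu'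
    rcases eq_or_ne w w' with rfl | hww
    · have hxy : x ≠ y := by
        intro h; exact hne (by rw [h])
      rw [dist_add_right]
      exact hCsep hx hy hxy
    · obtain ⟨i, hi⟩ := Function.ne_iff.1 hww
      have h1 : |x i - y i| ≤ m := by
        rw [abs_sub_le_iff]
        constructor <;> linarith [(hCcube x hx i).1, (hCcube x hx i).2,
          (hCcube y hy i).1, (hCcube y hy i).2]
      have h2 : (1 : ℝ) ≤ |(w i : ℝ) - (w' i : ℝ)| := by
        have h0 : w i - w' i ≠ 0 := sub_ne_zero.2 hi
        have h0' := Int.one_le_abs h0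
        calc (1:ℝ) ≤ |(w i - w' i : ℤ)| := by exact_mod_cast h0'
          _ = |(w i : ℝ) - (w' i : ℝ)| := by push_cast; ring_nf
      have hcoord : 2 * r ≤ |(x + lat A w) i - (y + lat A w') i| := by
        have he : (x + lat A w) i - (y + lat A w') i
            = (x i - y i) + A * ((w i : ℝ) - (w' i : ℝ)) := by
          rw [PiLp.add_apply, PiLp.add_apply, lat_apply, lat_apply]
          ring
        rw [he]
        have h3 : A ≤ A * |(w i : ℝ) - (w' i : ℝ)| := by nlinarith
        have h4 : A * |(w i : ℝ) - (w' i : ℝ)| = |A * ((w i : ℝ) - (w' i : ℝ))| := by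
          rw [abs_mul, abs_of_pos hA0]
        have h5 := abs_sub_abs_le_abs_sub (A * ((w i : ℝ) - (w' i : ℝ))) (-(x i - y i))
        rw [abs_neg, sub_neg_eq_add] at h5
        rw [add_comm]
        calc 2 * r = A - m := by rw [hA]; ring
          _ ≤ |A * ((w i : ℝ) - (w' i : ℝ))| - |x i - y i| := by
              rw [← h4]; linarith
          _ ≤ |A * ((w i : ℝ) - (w' i : ℝ)) + (x i - y i)| := h5
      calc 2 * r ≤ |(x + lat A w) i - (y + lat A w') i| := hcoord
        _ ≤ dist (x + lat A w) (y + lat A w') := abs_coord_le_dist _ _ _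
  have hCsub : C ⊆ cen := by
    intro x hx
    rw [hmem]
    exact ⟨0, x, hx, by rw [lat_zero, add_zero]⟩
  have hcenc : cen.Countable := by
    have : cen = ⋃ w : Fin n → ℤ, (fun y => y + lat A w) '' C := by
      ext z
      rw [hmem]
      simp only [Set.mem_iUnion, Set.mem_image]
      constructor
      · rintro ⟨w, y, hy, rfl⟩; exact ⟨w, y, hy, rfl⟩
      · rintro ⟨w, y, hy, rfl⟩; exact ⟨w, y, hy, rfl⟩
    rw [this]
    exact Set.countable_iUnion fun w => hCc.image _
  have hne : cen.Nonempty := hC.mono hCsub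
  have hdisj : cen.Pairwise fun x y => Disjoint (ball x r) (ball y r) :=
    fun u hu u' hu' hne' => disjoint_balls_of_dist (hdist u hu u' hu' hne')
  refine ⟨⟨cen, r, hr, hne, hdisj⟩, ?_, ?_, ?_, ?_, rfl⟩
  · -- IsPeriodic
    have hw : ∀ _i : Fin n, IsUnit A := fun _ => IsUnit.mk0 A hA0.ne'
    have hb : (fun i => A • ((EuclideanSpace.basisFun (Fin n) ℝ) i)) =
        ⇑((EuclideanSpace.basisFun (Fin n) ℝ).toBasis.isUnitSMul hw) := by
      funext i
      rw [Module.Basis.isUnitSMul_apply, OrthonormalBasis.coe_toBasis]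
    refine ⟨fun i => A • ((EuclideanSpace.basisFun (Fin n) ℝ) i), ?_, ?_, ?_⟩
    · rw [hb]
      exact ((EuclideanSpace.basisFun (Fin n) ℝ).toBasis.isUnitSMul hw).linearIndependent
    · rw [hb]
      exact ((EuclideanSpace.basisFun (Fin n) ℝ).toBasis.isUnitSMul hw).span_eq
    · intro c x
      have h7 := hshift c x
      rwa [lat_eq_sum] at h7
  · -- measurable
    show MeasurableSet (⋃ x ∈ cen, closedBall x r)
    exact MeasurableSet.biUnion hcenc (fun x _ => measurableSet_closedBall)
  · -- invariance of toSet
    intro w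
    ext z
    show z + lat A w ∈ (⋃ x ∈ cen, closedBall x r) ↔ z ∈ (⋃ x ∈ cen, closedBall x r)
    simp only [Set.mem_iUnion, exists_prop]
    constructor
    · rintro ⟨u, hu, hz⟩
      refine ⟨u - lat A w, ?_, ?_⟩
      · have h1 := hshift w (u - lat A w)
        rw [sub_add_cancel] at h1
        exact h1.2 hu
      · rw [mem_closedBall] at hz ⊢
        have h8 : u = (u - lat A w) + lat A w := by abel
        rw [h8, dist_add_right] at hz
        exact hz
    · rintro ⟨u, hu, hz⟩
      refine ⟨u + lat A w, (hshift w u).1 hu, ?_⟩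
      rw [mem_closedBall] at hz ⊢
      rw [dist_add_right]
      exact hz
  · -- contains the cluster balls
    apply Set.iUnion₂_subset
    intro x hx
    show closedBall x r ⊆ ⋃ y ∈ cen, closedBall y r
    exact Set.subset_biUnion_of_mem (u := fun y => closedBall y r) (hCsub hx)

lemma centers_countable (P : SpherePacking n) : P.centers.Countable := by
  have h : P.centers.PairwiseDisjoint (fun x => ball x P.radius) := P.disjoint
  exact h.countable_of_isOpen (fun x _ => isOpen_ball)
    (fun x _ => nonempty_ball.2 P.radius_pos)

lemma centers_dist (P : SpherePacking n) :
    P.centers.Pairwise fun x y => 2 * P.radius ≤ dist x y :=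
  fun x hx y hy hxy => dist_of_disjoint_balls P.radius_pos (P.disjoint hx hy hxy)

lemma exists_trivial (hn : 0 < n) :
    ∃ Q : SpherePacking n, Q.IsPeriodic ∧ 0 ≤ Q.upperDensity := by
  obtain ⟨Q, hper, -, -, -, -⟩ := mk_periodic hn (r := 1) one_pos (m := 0) le_rfl
    (fun _ => 0) {(0 : E n)} ⟨0, rfl⟩ (Set.countable_singleton _)
    (by
      intro x hx i
      rw [Set.mem_singleton_iff] at hx
      subst hx
      norm_num)
    (Set.pairwise_singleton _ _)
  exact ⟨Q, hper, upperDensity_nonneg Q⟩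

lemma key_step (hn : 0 < n) (P : SpherePacking n) {ε : ℝ} (hε : 0 < ε) :
    ∃ Q : SpherePacking n, Q.IsPeriodic ∧ P.upperDensity - ε ≤ Q.upperDensity := by
  set D := P.upperDensity with hD
  set r := P.radius with hr
  have hr0 : 0 < r := P.radius_pos
  have hD1 : D ≤ 1 := upperDensity_le_one P
  by_cases hDε : D ≤ ε
  · obtain ⟨Q, hper, hpos⟩ := exists_trivial hn
    exact ⟨Q, hper, by linarith⟩
  push_neg at hDε
  set δ := ε / 3 with hδ
  have hδ0 : 0 < δ := by positivity
  have hD2δ : 0 < D - 2 * δ := by rw [hδ]; linarith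
  have hDδ : 0 < D - δ := by rw [hδ]; linarith
  -- choose the cube size a
  set a := max 1 (4 * r * n / δ) with ha
  have ha1 : (1:ℝ) ≤ a := le_max_left _ _
  have haδ : 4 * r * n / δ ≤ a := le_max_right _ _
  have ha0 : (0:ℝ) < a := by linarith
  set A := a + 4 * r with hA
  have hA0 : 0 < A := by rw [hA]; linarith
  have hfrac : 1 - δ ≤ (a / A) ^ n := by
    have h1 : (-1 : ℝ) ≤ a / A := le_trans (by norm_num) (by positivity : (0:ℝ) ≤ a / A)
    have h2 := one_add_mul_sub_le_pow h1 n
    have h3 : a / A - 1 = -(4 * r / A) := by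
      field_simp
      rw [hA]; ring
    have h4 : 4 * r * n / A ≤ δ := by
      rw [div_le_iff₀ hA0]
      have h5 : 4 * r * n ≤ δ * a := by
        rw [div_le_iff₀ hδ0] at haδ
        linarith
      have h6 : δ * a ≤ δ * A := by
        apply mul_le_mul_of_nonneg_left _ hδ0.le
        rw [hA]; nlinarith
      linarith
    have h7 : 1 + (n:ℝ) * (a / A - 1) = 1 - 4 * r * n / A := by
      rw [h3]; ring
    rw [h7] at h2
    have : 1 - δ ≤ 1 - 4 * r * n / A := by linarith
    linarith
  have hstep : D - ε ≤ (D - 2*δ) * a ^ n / A ^ n := by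
    have h1 : (D - 2*δ) * a ^ n / A ^ n = (D - 2*δ) * (a / A) ^ n := by
      rw [div_pow]; ring
    rw [h1]
    have h2 : (D - 2*δ) * (1 - δ) ≤ (D - 2*δ) * (a / A) ^ n :=
      mul_le_mul_of_nonneg_left hfrac hD2δ.le
    have h3 : D - ε ≤ (D - 2*δ) * (1 - δ) := by
      rw [hδ]
      nlinarith
    linarith
  -- choose R
  set b := a * Real.sqrt n with hb
  have hb0 : 0 ≤ b := by positivity
  have hfreq : ∃ᶠ R in atTop, D - δ < ratio P R := by
    apply frequently_lt_of_lt_limsup ((ratio_bddBelow P).isCoboundedUnder_le)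
    rw [← upperDensity_eq, ← hD]
    linarith
  have htend : Tendsto (fun R : ℝ => ((R + b) / R) ^ n) atTop (nhds 1) := by
    have h1 : Tendsto (fun R : ℝ => (R + b) / R) atTop (nhds 1) := by
      have heq : (fun R : ℝ => (R + b) / R) =ᶠ[atTop] (fun R => 1 + b / R) := by
        filter_upwards [eventually_gt_atTop 0] with R hR
        field_simp
      rw [Filter.tendsto_congr' heq]
      have := Filter.Tendsto.const_add (1:ℝ)
        (tendsto_const_nhds.div_atTop (f := fun _ : ℝ => b) tendsto_id)
      simpa using this
    have := h1.pow n
    simpa using this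
  have hlt1 : (1:ℝ) < (D - δ) / (D - 2*δ) := by
    rw [lt_div_iff₀ hD2δ]
    linarith
  have hev2 := htend.eventually_lt_const hlt1
  obtain ⟨R, hRr, hRlt, hR1⟩ :=
    (hfreq.and_eventually (hev2.and (eventually_ge_atTop 1))).exists
  have hRpos : (0:ℝ) < R := by linarith
  set K := volume (ball (0 : E n) 1) with hK
  have hKfin : K ≠ ⊤ := measure_ball_lt_top.ne
  have hKpos : 0 < K := measure_ball_pos volume _ one_pos
  have hκ : 0 < K.toReal := ENNReal.toReal_pos hKpos.ne' hKfin
  have hvolR : volume (closedBall (0 : E n) R) = ENNReal.ofReal (R ^ n) * K := by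
    rw [hK, Measure.addHaar_closedBall volume (0 : E n) hRpos.le, finrank_euclideanSpace_fin]
  have hvolRb : volume (closedBall (0 : E n) (R + b)) =
      ENNReal.ofReal ((R + b) ^ n) * K := by
    rw [hK, Measure.addHaar_closedBall volume (0 : E n) (by linarith), finrank_euclideanSpace_fin]
  have hpoly : (D - 2*δ) * (R + b) ^ n < (D - δ) * R ^ n := by
    rw [div_pow] at hRlt
    rw [div_lt_div_iff₀ (by positivity) hD2δ] at hRlt
    linarith
  have hAfin : volume (P.toSet ∩ closedBall (0 : E n) R) ≠ ⊤ :=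
    (lt_of_le_of_lt (measure_mono Set.inter_subset_right) measure_closedBall_lt_top).ne
  have hBpos : 0 < (volume (closedBall (0 : E n) R)).toReal := by
    apply ENNReal.toReal_pos _ measure_closedBall_lt_top.ne
    exact (lt_of_lt_of_le (measure_ball_pos volume _ hRpos)
      (measure_mono ball_subset_closedBall)).ne'
  have hratio' : (D - δ) * (volume (closedBall (0 : E n) R)).toReal <
      (volume (P.toSet ∩ closedBall (0 : E n) R)).toReal := by
    have := hRr
    rw [ratio] at this
    rw [lt_div_iff₀ hBpos] at this
    linarith
  have hgoal : ENNReal.ofReal (D - 2*δ) * volume (closedBall (0 : E n) (R + a * Real.sqrt n)) <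
      volume (P.toSet ∩ closedBall (0 : E n) R) := by
    rw [← hb]
    have hLfin : ENNReal.ofReal (D - 2*δ) * volume (closedBall (0 : E n) (R + b)) ≠ ⊤ :=
      ENNReal.mul_ne_top ENNReal.ofReal_ne_top measure_closedBall_lt_top.ne
    rw [← ENNReal.toReal_lt_toReal hLfin hAfin]
    have hLval : (ENNReal.ofReal (D - 2*δ) * volume (closedBall (0 : E n) (R + b))).toReal
        = (D - 2*δ) * ((R + b) ^ n * K.toReal) := by
      rw [hvolRb, ENNReal.toReal_mul, ENNReal.toReal_mul,
        ENNReal.toReal_ofReal hD2δ.le, ENNReal.toReal_ofReal (by positivity)]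
    rw [hLval]
    have hBval : (volume (closedBall (0 : E n) R)).toReal = R ^ n * K.toReal := by
      rw [hvolR, ENNReal.toReal_mul, ENNReal.toReal_ofReal (by positivity)]
    calc (D - 2*δ) * ((R + b) ^ n * K.toReal)
        ≤ (D - δ) * R ^ n * K.toReal := by nlinarith
      _ = (D - δ) * (volume (closedBall (0 : E n) R)).toReal := by rw [hBval]; ring
      _ < _ := hratio'
  obtain ⟨v, hv⟩ := exists_good_cell P (o := fun _ => 0) ha0 (ENNReal.ofReal (D - 2*δ)) hgoal
  -- build the periodic packing from the cluster in the good cell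
  set o' : Fin n → ℝ := fun i => a * (v i : ℝ) - r with ho'
  set C : Set (E n) := P.centers ∩
    {x : E n | ∀ i, o' i ≤ x i ∧ x i ≤ o' i + (a + 2*r)} with hC
  have hsub2 : P.toSet ∩ cell (fun _ => 0) a v ⊆ ⋃ x ∈ C, closedBall x r := by
    rintro z ⟨hz1, hz2⟩
    rw [SpherePacking.toSet] at hz1
    simp only [Set.mem_iUnion, exists_prop] at hz1
    obtain ⟨y, hy, hzy⟩ := hz1
    have hyC : y ∈ C := by
      refine ⟨hy, ?_⟩
      intro i
      have h1 : |y i - z i| ≤ r := by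
        calc |y i - z i| ≤ dist y z := abs_coord_le_dist _ _ _
          _ = dist z y := dist_comm _ _
          _ ≤ r := mem_closedBall.1 hzy
      rw [cell, mem_cube] at hz2
      have h2 := hz2 i
      rw [abs_sub_le_iff] at h1
      simp only [ho']
      constructor <;> [linarith [h2.1, h1.1, h1.2]; linarith [h2.2, h1.1, h1.2]]
    exact Set.mem_biUnion hyC hzy
  have hvpos : 0 < volume (P.toSet ∩ cell (fun _ => 0) a v) :=
    lt_of_le_of_lt zero_le hv
  have hCne : C.Nonempty := by
    obtain ⟨z, hz⟩ := nonempty_of_measure_ne_zero hvpos.ne'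
    obtain ⟨x, hx, -⟩ := Set.mem_iUnion₂.1 (hsub2 hz)
    exact ⟨x, hx⟩
  have hCc : C.Countable := (centers_countable P).mono Set.inter_subset_left
  have hCsep : C.Pairwise fun x y => 2 * r ≤ dist x y :=
    (centers_dist P).mono Set.inter_subset_left
  have hCcube : ∀ x ∈ C, ∀ i, o' i ≤ x i ∧ x i ≤ o' i + (a + 2*r) := fun x hx => hx.2
  obtain ⟨Q, hQper, hQmeas, hQinv, hQsup, hQrad⟩ :=
    mk_periodic hn hr0 (by linarith : (0:ℝ) ≤ a + 2*r) o' C hCne hCc hCcube hCsep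
  have hAA : a + 2*r + 2*r = A := by rw [hA]; ring
  rw [hAA] at hQinv
  have hlow := periodic_lower Q hA0 o' hQmeas hQinv
  -- the good cell sits inside the fundamental cell of Q
  have hsubF : P.toSet ∩ cell (fun _ => 0) a v ⊆ Q.toSet ∩ cell o' A 0 := by
    intro z hz
    refine ⟨hQsup (hsub2 hz), ?_⟩
    have hz2 := hz.2
    rw [cell, mem_cube] at hz2 ⊢
    intro i
    have h2 := hz2 i
    simp only [ho', Pi.zero_apply, Int.cast_zero, hA]
    push_cast
    constructor <;> [nlinarith [h2.1, h2.2]; nlinarith [h2.1, h2.2]]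
  have hQFfin : volume (Q.toSet ∩ cell o' A 0) ≠ ⊤ := by
    apply ne_of_lt
    calc volume (Q.toSet ∩ cell o' A 0) ≤ volume (cell o' A 0) :=
        measure_mono Set.inter_subset_right
      _ < ⊤ := by rw [volume_cell _ hA0.le]; exact ENNReal.ofReal_lt_top
  have hQF : (D - 2*δ) * a ^ n ≤ (volume (Q.toSet ∩ cell o' A 0)).toReal := by
    have h1 : volume (P.toSet ∩ cell (fun _ => 0) a v) ≤ volume (Q.toSet ∩ cell o' A 0) :=
      measure_mono hsubF
    have h2 := ENNReal.toReal_mono hQFfin (le_trans hv.le h1)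
    rw [ENNReal.toReal_mul, ENNReal.toReal_ofReal hD2δ.le,
      ENNReal.toReal_ofReal (by positivity)] at h2
    exact h2
  refine ⟨Q, hQper, ?_⟩
  have hdiv : (D - 2*δ) * a ^ n / A ^ n ≤
      (volume (Q.toSet ∩ cell o' A 0)).toReal / A ^ n :=
    div_le_div_of_nonneg_right hQF (by positivity) |>.trans_eq rfl
  calc P.upperDensity - ε = D - ε := by rw [hD]
    _ ≤ (D - 2*δ) * a ^ n / A ^ n := hstep
    _ ≤ (volume (Q.toSet ∩ cell o' A 0)).toReal / A ^ n := hdiv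
    _ ≤ Q.upperDensity := hlow

end PPAux

/-- For every sphere packing `P` in `ℝⁿ` and every `ε > 0` there exists a periodic sphere
packing whose upper density is at least the upper density of `P` minus `ε`; consequently,
the supremum of the upper densities of periodic sphere packings equals the sphere packing
density `Δ_{ℝⁿ}`. -/
theorem periodic_packings_attain_density (n : ℕ) (hn : 0 < n) :
    (∀ P : SpherePacking n, ∀ ε : ℝ, 0 < ε →
      ∃ Q : SpherePacking n, Q.IsPeriodic ∧ P.upperDensity - ε ≤ Q.upperDensity) ∧
    sSup {d : ℝ | ∃ Q : SpherePacking n, Q.IsPeriodic ∧ Q.upperDensity = d} =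
      spherePackingDensity n := by
  constructor
  · intro P ε hε
    exact PPAux.key_step hn P hε
  · set S := {d : ℝ | ∃ Q : SpherePacking n, Q.IsPeriodic ∧ Q.upperDensity = d} with hS
    obtain ⟨Q₀, hQ₀, -⟩ := PPAux.exists_trivial (n := n) hn
    have hSne : S.Nonempty := ⟨Q₀.upperDensity, Q₀, hQ₀, rfl⟩
    have hSbdd : BddAbove S := by
      refine ⟨1, ?_⟩
      rintro d ⟨Q, -, rfl⟩
      exact PPAux.upperDensity_le_one Q
    have hRbdd : BddAbove (Set.range fun P : SpherePacking n => P.upperDensity) := by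
      refine ⟨1, ?_⟩
      rintro d ⟨P, rfl⟩
      exact PPAux.upperDensity_le_one P
    have hnonempty : Nonempty (SpherePacking n) := ⟨Q₀⟩
    apply le_antisymm
    · apply csSup_le hSne
      rintro d ⟨Q, -, rfl⟩
      exact le_ciSup hRbdd Q
    · rw [spherePackingDensity]
      apply ciSup_le
      intro P
      apply le_of_forall_pos_le_add
      intro ε hε
      obtain ⟨Q, hQper, hQud⟩ := PPAux.key_step hn P hε
      have h1 : Q.upperDensity ≤ sSup S := le_csSup hSbdd ⟨Q, hQper, rfl⟩
      linarith
end
end
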